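/- Let n ≥ 1 and let H : ℝⁿ → ℝ be continuously differentiable and satisfy (H3): there exist γ, δ > 0 such that ∇H(p)·p − γ H(p) ≥ δ for all p ∈ ℝⁿ. Then for every p ∈ ℝⁿ and every t > 1, one has H(t p) ≥ t^{γ} H(p) + (δ/(γ+1)) (t^{γ} − 1). -/

import Mathlib

open scoped RealInnerProductSpace

theorem stmt6 (n : ℕ) (hn : 1 ≤ n)
    (H : EuclideanSpace ℝ (Fin n) → ℝ) (hH : ContDiff ℝ 1 H)
    (γ δ : ℝ) (hγ : 0 < γ) (hδ : 0 < δ)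
    (hH3 : ∀ p, ⟪gradient H p, p⟫ - γ * H p ≥ δ) :
    ∀ p : EuclideanSpace ℝ (Fin n), ∀ t : ℝ, 1 < t →
      H (t • p) ≥ t ^ γ * H p + δ / (γ + 1) * (t ^ γ - 1) := by
  intro p t ht
  have ht0 : (0:ℝ) < t := lt_trans one_pos ht
  -- derivative of s ↦ H (s • p)
  have hφd : ∀ s : ℝ, HasDerivAt (fun u : ℝ => H (u • p)) ⟪gradient H (s • p), p⟫ s := by
    intro s
    have h1 : HasFDerivAt H (InnerProductSpace.toDual ℝ _ (gradient H (s • p))) (s • p) :=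
      ((hH.differentiable one_ne_zero) (s • p)).hasGradientAt.hasFDerivAt
    have h2 : HasDerivAt (fun u : ℝ => u • p) p s := by
      simpa using (hasDerivAt_id s).smul_const p
    have h3 := h1.comp_hasDerivAt s h2
    have h4 : HasDerivAt (fun u : ℝ => H (u • p)) ((InnerProductSpace.toDual ℝ _ (gradient H (s • p))) p) s := h3
    simpa [InnerProductSpace.toDual_apply_apply] using h4
  set f : ℝ → ℝ := fun s => s ^ (-γ) * (H (s • p) + δ / γ) with hf
  have hfd : ∀ s : ℝ, 0 < s → HasDerivAt f
      ((-γ * s ^ (-γ - 1)) * (H (s • p) + δ / γ) + s ^ (-γ) * ⟪gradient H (s • p), p⟫) s := by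
    intro s hs
    have h1 : HasDerivAt (fun x : ℝ => x ^ (-γ)) (-γ * s ^ (-γ - 1)) s := by
      simpa using Real.hasDerivAt_rpow_const (p := -γ) (Or.inl (ne_of_gt hs))
    exact h1.mul ((hφd s).add_const (δ / γ))
  have hderiv_nonneg : ∀ s : ℝ, 0 < s →
      0 ≤ (-γ * s ^ (-γ - 1)) * (H (s • p) + δ / γ) + s ^ (-γ) * ⟪gradient H (s • p), p⟫ := by
    intro s hs
    have hsp := hH3 (s • p)
    have hinner : ⟪gradient H (s • p), s • p⟫ = s * ⟪gradient H (s • p), p⟫ :=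
      real_inner_smul_right _ _ _
    have hpow : s ^ (-γ) = s ^ (-γ - 1) * s := by
      rw [← Real.rpow_add_one (ne_of_gt hs)]
      ring_nf
    have hpow1 : 0 < s ^ (-γ - 1) := Real.rpow_pos_of_pos hs _
    have key : s * ⟪gradient H (s • p), p⟫ - γ * H (s • p) - δ ≥ 0 := by
      rw [← hinner]; linarith
    have hγδ : γ * (δ / γ) = δ := by field_simp
    calc (0:ℝ) ≤ s ^ (-γ - 1) * (s * ⟪gradient H (s • p), p⟫ - γ * H (s • p) - δ) :=
          mul_nonneg hpow1.le key
      _ = (-γ * s ^ (-γ - 1)) * (H (s • p) + δ / γ) + s ^ (-γ) * ⟪gradient H (s • p), p⟫ := by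
          rw [hpow]; field_simp; ring
  -- monotonicity on [1, t]
  have hmono : f 1 ≤ f t := by
    have hmem : ∀ s ∈ Set.Icc (1:ℝ) t, 0 < s := fun s hs => lt_of_lt_of_le one_pos hs.1
    have hc : ContinuousOn f (Set.Icc 1 t) := fun s hs =>
      ((hfd s (hmem s hs)).continuousAt).continuousWithinAt
    have hint : interior (Set.Icc (1:ℝ) t) = Set.Ioo 1 t := interior_Icc
    have hdiff : DifferentiableOn ℝ f (interior (Set.Icc (1:ℝ) t)) := by
      rw [hint]
      exact fun s hs => ((hfd s (lt_trans one_pos hs.1)).differentiableAt).differentiableWithinAt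
    have hd0 : ∀ s ∈ interior (Set.Icc (1:ℝ) t), 0 ≤ deriv f s := by
      rw [hint]
      intro s hs
      have hs0 : 0 < s := lt_trans one_pos hs.1
      rw [(hfd s hs0).deriv]
      exact hderiv_nonneg s hs0
    exact monotoneOn_of_deriv_nonneg (convex_Icc 1 t) hc hdiff hd0
      (Set.left_mem_Icc.mpr ht.le) (Set.right_mem_Icc.mpr ht.le) ht.le
  have hf1 : f 1 = H p + δ / γ := by simp [hf]
  have hneg : t ^ (-γ) = (t ^ γ)⁻¹ := Real.rpow_neg ht0.le γ
  have htγ : 0 < t ^ γ := Real.rpow_pos_of_pos ht0 γ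
  have htγ1 : 1 < t ^ γ := Real.one_lt_rpow_iff_of_pos ht0 |>.mpr (Or.inl ⟨ht, hγ⟩)
  have hft : f t = (t ^ γ)⁻¹ * (H (t • p) + δ / γ) := by rw [hf]; simp [hneg]
  rw [hf1, hft] at hmono
  have h2 : t ^ γ * (H p + δ / γ) ≤ H (t • p) + δ / γ := by
    have := mul_le_mul_of_nonneg_left hmono htγ.le
    rwa [mul_inv_cancel_left₀ (ne_of_gt htγ)] at this
  -- H(tp) ≥ t^γ H p + (δ/γ)(t^γ - 1) ≥ t^γ H p + (δ/(γ+1))(t^γ - 1)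
  have hdd : δ / (γ + 1) ≤ δ / γ := by
    apply div_le_div_of_nonneg_left hδ.le hγ; linarith
  nlinarith [mul_le_mul_of_nonneg_left hdd (by linarith : (0:ℝ) ≤ t ^ γ - 1)]
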